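/- arXiv:1204.3768 — 3 statements merged into one kernel-verified Lean document; each statement's English description precedes it below -/
import Mathlib

section
/- Let a : ℝ → ℝ be the 1-periodic function given by a(x) = 1 for x − ⌊x⌋ ∈ [0, 1/2) and a(x) = 2 for x − ⌊x⌋ ∈ [1/2, 1]. Then (∫₀¹ (a(x) + i)⁻¹ dx)⁻¹ = 18/13 + (14/13) i, and in particular this differs from ∫₀¹ a(x) dx + i = 3/2 + i. -/
open Complex MeasureTheory

lemma key_integral (c1 c2 : ℂ) :
    ∫ x in (0:ℝ)..1, (if Int.fract x < 1 / 2 then c1 else c2) =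
      (1 / 2 : ℝ) • c1 + (1 / 2 : ℝ) • c2 := by
  set f : ℝ → ℂ := fun x => if Int.fract x < 1 / 2 then c1 else c2 with hf
  have hm : Measurable f :=
    Measurable.ite (measurableSet_lt measurable_fract measurable_const)
      measurable_const measurable_const
  have hint : ∀ p q : ℝ, IntervalIntegrable f volume p q := by
    intro p q
    apply IntervalIntegrable.mono_fun (f := fun _ => max ‖c1‖ ‖c2‖)
      (intervalIntegrable_const) (hm.aestronglyMeasurable.restrict)
    filter_upwards with x
    simp only [hf, Real.norm_eq_abs, norm_norm]
    split_ifs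
    · exact (le_max_left _ _).trans (le_abs_self _)
    · exact (le_max_right _ _).trans (le_abs_self _)
  rw [← intervalIntegral.integral_add_adjacent_intervals (b := 1/2) (hint 0 (1/2)) (hint (1/2) 1)]
  have h1 : (∫ x in (0:ℝ)..(1/2), f x) = ∫ x in (0:ℝ)..(1/2), c1 := by
    apply intervalIntegral.integral_congr_ae
    have hs : ({(1/2 : ℝ)} : Set ℝ)ᶜ ∈ ae (volume : Measure ℝ) :=
      compl_mem_ae_iff.2 (measure_singleton _)
    filter_upwards [hs] with x hx hmem
    rw [Set.uIoc_of_le (by norm_num)] at hmem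
    have hx2 : x < 1/2 := lt_of_le_of_ne hmem.2 (by simpa using hx)
    have : Int.fract x = x := Int.fract_eq_self.2 ⟨hmem.1.le, by linarith⟩
    simp only [hf]
    rw [this, if_pos hx2]
  have h2 : (∫ x in (1/2:ℝ)..1, f x) = ∫ x in (1/2:ℝ)..1, c2 := by
    apply intervalIntegral.integral_congr_ae
    have hs : ({(1 : ℝ)} : Set ℝ)ᶜ ∈ ae (volume : Measure ℝ) :=
      compl_mem_ae_iff.2 (measure_singleton _)
    filter_upwards [hs] with x hx hmem
    rw [Set.uIoc_of_le (by norm_num)] at hmem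
    have hx2 : x < 1 := lt_of_le_of_ne hmem.2 (by simpa using hx)
    have : Int.fract x = x := Int.fract_eq_self.2 ⟨by linarith [hmem.1], hx2⟩
    simp only [hf]
    rw [this, if_neg (not_lt.2 hmem.1.le)]
  rw [h1, h2]
  simp
  norm_num

/-- For the 1-periodic function `a` taking value `1` on `[0,1/2)` and `2` on `[1/2,1)`,
the inverse of the mean of `(a + i)⁻¹` is `18/13 + (14/13)i`, which differs from
`∫₀¹ a + i = 3/2 + i`. -/
theorem harmonic_mean_differs
    (a : ℝ → ℝ) (ha : ∀ x : ℝ, a x = if Int.fract x < 1 / 2 then 1 else 2) :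
    (∫ x in (0:ℝ)..1, ((a x : ℂ) + Complex.I)⁻¹)⁻¹ = 18 / 13 + (14 / 13) * Complex.I ∧
    (∫ x in (0:ℝ)..1, (a x : ℂ)) + Complex.I = 3 / 2 + Complex.I ∧
    (18 / 13 + (14 / 13) * Complex.I : ℂ) ≠ 3 / 2 + Complex.I := by
  refine ⟨?_, ?_, ?_⟩
  · have e : (∫ x in (0:ℝ)..1, ((a x : ℂ) + Complex.I)⁻¹) =
        ∫ x in (0:ℝ)..1, (if Int.fract x < 1 / 2 then ((1:ℂ) + Complex.I)⁻¹
          else ((2:ℂ) + Complex.I)⁻¹) := by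
      congr 1; funext x; rw [ha x]; split_ifs <;> norm_num
    rw [e, key_integral]
    have n1 : ((1:ℂ) + Complex.I) ≠ 0 := by
      intro h; rw [Complex.ext_iff] at h; simp at h
    have n2 : ((2:ℂ) + Complex.I) ≠ 0 := by
      intro h; rw [Complex.ext_iff] at h; norm_num at h
    have hsum : (1 / 2 : ℝ) • ((1:ℂ) + Complex.I)⁻¹ + (1 / 2 : ℝ) • ((2:ℂ) + Complex.I)⁻¹
        = (9 - 7 * Complex.I) / 20 := by
      rw [Complex.real_smul, Complex.real_smul]
      push_cast
      field_simp
      linear_combination (24 + 14 * Complex.I) * Complex.I_sq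
    rw [hsum]
    have n3 : ((9:ℂ) - 7 * Complex.I) ≠ 0 := by
      intro h; rw [Complex.ext_iff] at h; norm_num at h
    field_simp
    linear_combination (98 : ℂ) * Complex.I_sq
  · have e : (∫ x in (0:ℝ)..1, (a x : ℂ)) =
        ∫ x in (0:ℝ)..1, (if Int.fract x < 1 / 2 then (1:ℂ) else 2) := by
      congr 1; funext x; rw [ha x]; split_ifs <;> norm_num
    rw [e, key_integral]
    norm_num
  · intro h
    rw [Complex.ext_iff] at h
    have := h.1
    norm_num [Complex.add_re, Complex.div_re] at this
end

section
/- Let H be a Hilbert space, ε > 0, 0 < r < ε/2, c > 0, and let M ∈ H^∞(B(0,ε); L(H)) satisfy Re(z⁻¹ M(z)) ≥ c for all z ∈ B(r,r) (the disc with center r and radius r). Then for every φ in the nullspace of M(0), one has ⟨(Re M'(0))φ, φ⟩ ≥ c⟨φ, φ⟩. -/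
open Metric Filter Topology

/-- For a `(c)`-material law `M` (bounded analytic on `B(0,ε)` with
`Re (z⁻¹ M(z)) ≥ c` on the disc `B(r,r)`, `0 < r < ε/2`), one has
`⟨(Re M'(0))φ, φ⟩ ≥ c ⟨φ, φ⟩` for every `φ` in the nullspace of `M(0)`. -/
theorem re_deriv_pos_on_kernel_of_material_law
    {H : Type*} [NormedAddCommGroup H] [InnerProductSpace ℂ H] [CompleteSpace H]
    (ε r c C : ℝ) (hε : 0 < ε) (hr : 0 < r) (hrε : r < ε / 2) (hc : 0 < c)
    (M : ℂ → H →L[ℂ] H)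
    (hanal : AnalyticOnNhd ℂ M (ball (0 : ℂ) ε))
    (hbd : ∀ z ∈ ball (0 : ℂ) ε, ‖M z‖ ≤ C)
    (hacc : ∀ z ∈ ball (r : ℂ) r, ∀ φ : H,
      c * ‖φ‖ ^ 2 ≤ (z⁻¹ * (inner ℂ φ (M z φ) : ℂ)).re) :
    ∀ φ : H, M 0 φ = 0 → c * ‖φ‖ ^ 2 ≤ (inner ℂ φ (deriv M 0 φ) : ℂ).re := by
  intro φ hφ
  set g : ℂ → ℂ := fun z => inner ℂ φ (M z φ) with hgdef
  have hg0 : g 0 = 0 := by simp [hgdef, hφ]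
  have hM0 : AnalyticAt ℂ M 0 := hanal 0 (by simpa using hε)
  have hMd : HasDerivAt M (deriv M 0) 0 := hM0.differentiableAt.hasDerivAt
  set L : (H →L[ℂ] H) →L[ℂ] ℂ :=
    (innerSL ℂ φ).comp (ContinuousLinearMap.apply ℂ H φ) with hLdef
  have hgd : HasDerivAt g ((inner ℂ φ (deriv M 0 φ) : ℂ)) 0 := by
    have h := L.hasFDerivAt.comp_hasDerivAt 0 hMd
    simpa [hgdef, hLdef, Function.comp_def] using h
  -- slope convergence
  have hslope : Tendsto (fun z : ℂ => z⁻¹ * g z) (𝓝[≠] (0:ℂ))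
      (𝓝 ((inner ℂ φ (deriv M 0 φ) : ℂ))) := by
    have h := hasDerivAt_iff_tendsto_slope.mp hgd
    refine h.congr (fun z => ?_)
    simp [slope_def_field, hg0, div_eq_inv_mul]
  have hcoe : Tendsto (fun η : ℝ => (η : ℂ)) (𝓝[>] (0:ℝ)) (𝓝[≠] (0:ℂ)) := by
    rw [tendsto_nhdsWithin_iff]
    constructor
    · exact (Complex.continuous_ofReal.tendsto 0).mono_left nhdsWithin_le_nhds
    · filter_upwards [self_mem_nhdsWithin] with η (hη : 0 < η)
      simpa using (show (η:ℂ) ≠ 0 by exact_mod_cast hη.ne')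
  have htend : Tendsto (fun η : ℝ => (((η:ℂ))⁻¹ * g η).re) (𝓝[>] (0:ℝ))
      (𝓝 ((inner ℂ φ (deriv M 0 φ) : ℂ).re)) :=
    (Complex.continuous_re.tendsto _).comp (hslope.comp hcoe)
  refine ge_of_tendsto htend ?_
  filter_upwards [Ioo_mem_nhdsGT_of_mem (⟨le_rfl, by linarith⟩ :
      (0:ℝ) ∈ Set.Ico 0 (2 * r))] with η hη
  have hmem : (η : ℂ) ∈ ball (r : ℂ) r := by
    rw [mem_ball, Complex.dist_eq]
    have : ((η : ℂ) - r) = ((η - r : ℝ) : ℂ) := by push_cast; ring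
    rw [this, Complex.norm_real, Real.norm_eq_abs, abs_lt]
    obtain ⟨h1, h2⟩ := hη
    constructor <;> linarith
  exact hacc _ hmem φ
end

section
/- Let H be a Hilbert space, ε > 0, 0 < r < ε/2, c > 0, and M ∈ H^∞(B(0,ε); L(H)) with Re(z⁻¹M(z)) ≥ c for all z in the disc B(r,r). Then ⟨φ, M(0)φ⟩ ≥ 0 for all φ ∈ H; in particular M(0) is positive semidefinite (and hence selfadjoint). -/
open Metric
open scoped ComplexOrder

open Filter Set Complex in
/-- Auxiliary limit lemma: if `w t * f (γ t)` has nonnegative real part along a curve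
`γ` tending to `0` from the right, then so does the limit `w0 * f 0`. -/
lemma aux_limre (f : ℂ → ℂ) (hf : ContinuousAt f 0) (γ : ℝ → ℂ) (w : ℝ → ℂ) (w0 : ℂ)
    (hγ : Tendsto γ (nhdsWithin 0 (Ioi 0)) (nhds 0))
    (hw : Tendsto w (nhdsWithin 0 (Ioi 0)) (nhds w0))
    (hpos : ∀ᶠ t in nhdsWithin 0 (Ioi 0), 0 ≤ (w t * f (γ t)).re) :
    0 ≤ (w0 * f 0).re := by
  have h1 : Tendsto (fun t => (w t * f (γ t)).re) (nhdsWithin 0 (Ioi 0))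
      (nhds ((w0 * f 0).re)) :=
    (Complex.continuous_re.tendsto _).comp (hw.mul ((hf.tendsto).comp hγ))
  exact ge_of_tendsto h1 hpos

/-- Auxiliary complex multiplication identity. -/
lemma aux_cmul (w1 s' a b : ℝ) :
    ((w1:ℂ) - (s':ℂ) * Complex.I) * ((a:ℂ) + (b:ℂ) * Complex.I)
    = ((w1*a + s'*b : ℝ):ℂ) + ((w1*b - s'*a : ℝ):ℂ) * Complex.I := by
  apply Complex.ext <;>
    simp only [Complex.mul_re, Complex.mul_im, Complex.sub_re, Complex.sub_im,
      Complex.add_re, Complex.add_im, Complex.ofReal_re, Complex.ofReal_im,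
      Complex.I_re, Complex.I_im] <;> ring

/-- For a `(c)`-material law `M` (bounded analytic on `B(0,ε)` with
`Re (z⁻¹ M(z)) ≥ c` on the disc `B(r,r)`, `0 < r < ε/2`), the operator `M(0)` is
positive semidefinite: `⟨φ, M(0)φ⟩ ≥ 0` for all `φ`; in particular `M(0)` is selfadjoint. -/
theorem zeroth_coefficient_nonneg_of_material_law
    {H : Type*} [NormedAddCommGroup H] [InnerProductSpace ℂ H] [CompleteSpace H]
    (ε r c C : ℝ) (hε : 0 < ε) (hr : 0 < r) (hrε : r < ε / 2) (hc : 0 < c)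
    (M : ℂ → H →L[ℂ] H)
    (hanal : AnalyticOnNhd ℂ M (ball (0 : ℂ) ε))
    (hbd : ∀ z ∈ ball (0 : ℂ) ε, ‖M z‖ ≤ C)
    (hacc : ∀ z ∈ ball (r : ℂ) r, ∀ φ : H,
      c * ‖φ‖ ^ 2 ≤ (z⁻¹ * (inner ℂ φ (M z φ) : ℂ)).re) :
    (∀ φ : H, 0 ≤ (inner ℂ φ (M 0 φ) : ℂ)) ∧ IsSelfAdjoint (M 0) := by
  have h0mem : (0 : ℂ) ∈ ball (0 : ℂ) ε := mem_ball_self hε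
  have hMcont : ContinuousAt M 0 := (hanal 0 h0mem).continuousAt
  have key : ∀ φ : H, 0 ≤ (inner ℂ φ (M 0 φ) : ℂ) := by
    intro φ
    set f : ℂ → ℂ := fun z => (inner ℂ φ (M z φ) : ℂ) with hfdef
    have hf : ContinuousAt f 0 :=
      ContinuousAt.inner continuousAt_const
        (((ContinuousLinearMap.apply ℂ H φ).continuous.continuousAt).comp hMcont)
    have hball : ∀ z ∈ ball (r : ℂ) r, 0 ≤ (z⁻¹ * f z).re := fun z hz =>
      le_trans (by positivity) (hacc z hz φ)
    -- membership of parabola points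
    have hmem : ∀ s : ℝ, s = 1 ∨ s = -1 → ∀ t ∈ Set.Ioo (0:ℝ) r,
        ((t^2/r : ℝ) + (s*t : ℝ) * Complex.I : ℂ) ∈ ball (r : ℂ) r := by
      intro s hs t ht
      have hs2 : s^2 = 1 := by rcases hs with rfl | rfl <;> norm_num
      have hst : (s*t)^2 = t^2 := by rw [mul_pow, hs2, one_mul]
      have hu : (t^2/r) * r = t^2 := div_mul_cancel₀ _ hr.ne'
      have hu2 : (t^2/r)^2 < t^2 := by
        have hupos : 0 < t^2/r := div_pos (pow_pos ht.1 2) hr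
        have hut : t^2/r < t := by
          rw [div_lt_iff₀ hr]; nlinarith [ht.1, ht.2]
        nlinarith
      rw [mem_ball, Complex.dist_eq, Complex.norm_def, Real.sqrt_lt' hr]
      have hzr : (((t^2/r : ℝ) + (s*t : ℝ) * Complex.I : ℂ) - (r:ℂ))
          = ((t^2/r - r : ℝ):ℂ) + ((s*t : ℝ):ℂ) * Complex.I := by
        push_cast; ring
      rw [hzr, Complex.normSq_add_mul_I]
      nlinarith [hu, hst, hu2]
    -- limit along real axis: Re f 0 ≥ 0
    have hre : 0 ≤ ((1:ℂ) * f 0).re := by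
      apply aux_limre f hf (fun t => (t:ℂ)) (fun _ => 1) 1
      · have h0 : Filter.Tendsto (fun t : ℝ => (t:ℂ)) (nhds 0) (nhds 0) := by
          exact_mod_cast Complex.continuous_ofReal.tendsto 0
        exact h0.mono_left nhdsWithin_le_nhds
      · exact tendsto_const_nhds
      · filter_upwards [Ioo_mem_nhdsGT hr] with t ht
        have hmem' : (t : ℂ) ∈ ball (r : ℂ) r := by
          rw [mem_ball, Complex.dist_eq]
          rw [show ((t:ℂ) - r) = ((t - r : ℝ) : ℂ) by push_cast; ring, Complex.norm_real, Real.norm_eq_abs]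
          rw [abs_lt]
          constructor <;> linarith [ht.1, ht.2]
        have h1 := hball _ hmem'
        have ht0 : (0:ℝ) < t := ht.1
        have h2 : ((t:ℂ)⁻¹ * f t).re = t⁻¹ * (f t).re := by
          rw [show ((t:ℂ))⁻¹ = ((t⁻¹ : ℝ) : ℂ) by push_cast; ring]
          exact Complex.re_ofReal_mul _ _
        rw [h2] at h1
        have h3 : 0 ≤ (f t).re := by
          have h4 := mul_le_mul_of_nonneg_left h1 ht0.le
          rwa [mul_zero, ← mul_assoc, mul_inv_cancel₀ ht0.ne', one_mul] at h4
        simpa using h3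
    -- limits along parabolas: ±Im f 0 ≥ 0
    have him : ∀ s : ℝ, s = 1 ∨ s = -1 →
        0 ≤ ((-(s:ℂ) * Complex.I) * f 0).re := by
      intro s hs
      have hs2 : s^2 = 1 := by rcases hs with rfl | rfl <;> norm_num
      have hcγ : Continuous (fun t : ℝ => ((t^2/r : ℝ) + (s*t : ℝ) * Complex.I : ℂ)) := by
        apply Continuous.add
        · exact Complex.continuous_ofReal.comp (by fun_prop)
        · exact (Complex.continuous_ofReal.comp (by fun_prop)).mul continuous_const
      have hcw : Continuous (fun t : ℝ => (((t/r : ℝ) : ℂ) - (s:ℂ) * Complex.I)) := by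
        apply Continuous.sub
        · exact Complex.continuous_ofReal.comp (by fun_prop)
        · exact continuous_const
      apply aux_limre f hf (fun t => ((t^2/r : ℝ) + (s*t : ℝ) * Complex.I : ℂ))
        (fun t => (((t/r : ℝ) : ℂ) - (s:ℂ) * Complex.I)) (-(s:ℂ) * Complex.I)
      · refine Filter.Tendsto.mono_left ?_ nhdsWithin_le_nhds
        convert hcγ.tendsto 0 using 2
        push_cast
        ring
      · refine Filter.Tendsto.mono_left ?_ nhdsWithin_le_nhds
        convert hcw.tendsto 0 using 2
        push_cast
        ring
      · filter_upwards [Ioo_mem_nhdsGT hr] with t ht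
        set z : ℂ := ((t^2/r : ℝ) + (s*t : ℝ) * Complex.I : ℂ) with hzdef
        have hzmem : z ∈ ball (r : ℂ) r := hmem s hs t ht
        have ht0 : (0:ℝ) < t := ht.1
        have hz0 : z ≠ 0 := by
          intro h
          have h5 := mem_ball.mp hzmem
          rw [h] at h5
          rw [Complex.dist_eq, zero_sub, norm_neg, Complex.norm_real, Real.norm_eq_abs,
            abs_of_pos hr] at h5
          exact lt_irrefl r h5
        -- w t * z is a nonnegative real number over t
        have h7 : (t/r)*(s*t) - s*(t^2/r) = 0 := by ring
        have h8 : (t/r)*(t^2/r) + s*(s*t) = t^3/r^2 + s^2*t := by ring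
        have hwz : (((t/r : ℝ) : ℂ) - (s:ℂ) * Complex.I) * z
            = ((t^3/r^2 + s^2*t : ℝ) : ℂ) := by
          rw [hzdef, aux_cmul, h7, h8]
          simp
        have hweq : (((t/r : ℝ) : ℂ) - (s:ℂ) * Complex.I)
            = ((t^3/r^2 + s^2*t : ℝ) : ℂ) * z⁻¹ := by
          rw [← hwz, mul_assoc, mul_inv_cancel₀ hz0, mul_one]
        rw [hweq, mul_assoc, Complex.re_ofReal_mul]
        have hk : 0 ≤ t^3/r^2 + s^2*t :=
          add_nonneg (div_nonneg (pow_nonneg ht0.le 3) (sq_nonneg r))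
            (mul_nonneg (sq_nonneg s) ht0.le)
        exact mul_nonneg hk (hball z hzmem)
    have him1 := him 1 (Or.inl rfl)
    have him2 := him (-1) (Or.inr rfl)
    have himre1 : 0 ≤ (f 0).im := by
      simpa [Complex.mul_re] using him1
    have himre2 : (f 0).im ≤ 0 := by
      have h6 : 0 ≤ -(f 0).im := by simpa [Complex.mul_re] using him2
      linarith
    have hfre : 0 ≤ (f 0).re := by simpa using hre
    rw [Complex.le_def]
    exact ⟨by simpa using hfre, by simpa using (le_antisymm himre2 himre1).symm⟩
  refine ⟨key, ?_⟩
  apply LinearMap.IsSymmetric.isSelfAdjoint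
  rw [LinearMap.isSymmetric_iff_inner_map_self_real]
  intro v
  have h := key v
  have him0 : (inner ℂ v (M 0 v) : ℂ).im = 0 := ((Complex.le_def.mp h).2).symm
  rw [Complex.conj_eq_iff_im,
    show (inner ℂ ((M 0 : H →ₗ[ℂ] H) v) v : ℂ) = (starRingEnd ℂ) (inner ℂ v ((M 0) v) : ℂ)
      from (inner_conj_symm _ _).symm,
    Complex.conj_im, neg_eq_zero]
  exact him0
end
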